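/- (Monotonicity of the Schur complement) Let P = [[P₁, P₂],[P₂ᵀ, P₃]] and Q = [[Q₁, Q₂],[Q₂ᵀ, Q₃]] be positive semidefinite block matrices. If P ⪰ Q then P₁ − P₂ P₃† P₂ᵀ ⪰ Q₁ − Q₂ Q₃† Q₂ᵀ ⪰ 0, where † denotes the Moore–Penrose pseudoinverse. -/

import Mathlib

open Matrix

/-- `M'` is the Moore–Penrose pseudoinverse of `M`. -/
def IsMoorePenroseInv {m : ℕ} (M M' : Matrix (Fin m) (Fin m) ℝ) : Prop :=
  M * M' * M = M ∧ M' * M * M' = M' ∧ (M * M')ᵀ = M * M' ∧ (M' * M)ᵀ = M' * M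

lemma mp_unique {m : ℕ} {A X Y : Matrix (Fin m) (Fin m) ℝ}
    (hX : IsMoorePenroseInv A X) (hY : IsMoorePenroseInv A Y) : X = Y := by
  obtain ⟨hX1, hX2, hX3, hX4⟩ := hX
  obtain ⟨hY1, hY2, hY3, hY4⟩ := hY
  have hAX : A * X = A * Y := by
    calc A * X = (A * X)ᵀ := hX3.symm
      _ = ((A * Y) * (A * X))ᵀ := by rw [← Matrix.mul_assoc, hY1]
      _ = (A * X)ᵀ * (A * Y)ᵀ := Matrix.transpose_mul _ _
      _ = (A * X) * (A * Y) := by rw [hX3, hY3]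
      _ = A * Y := by rw [← Matrix.mul_assoc, hX1]
  have hXA : X * A = Y * A := by
    calc X * A = (X * A)ᵀ := hX4.symm
      _ = ((X * A) * (Y * A))ᵀ := by
            rw [Matrix.mul_assoc, ← Matrix.mul_assoc A Y A, hY1]
      _ = (Y * A)ᵀ * (X * A)ᵀ := Matrix.transpose_mul _ _
      _ = (Y * A) * (X * A) := by rw [hX4, hY4]
      _ = Y * A := by rw [Matrix.mul_assoc, ← Matrix.mul_assoc A X A, hX1]
  calc X = X * A * X := hX2.symm
    _ = X * (A * Y) := by rw [Matrix.mul_assoc, hAX]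
    _ = Y * A * Y := by rw [← Matrix.mul_assoc, hXA]
    _ = Y := hY2

lemma mp_symm {m : ℕ} {C C' : Matrix (Fin m) (Fin m) ℝ}
    (hC : Cᵀ = C) (h : IsMoorePenroseInv C C') : C'ᵀ = C' := by
  obtain ⟨h1, h2, h3, h4⟩ := h
  have k : C * C'ᵀ = C' * C := by
    calc C * C'ᵀ = (C' * Cᵀ)ᵀ := by
          rw [Matrix.transpose_mul, Matrix.transpose_transpose]
      _ = (C' * C)ᵀ := by rw [hC]
      _ = C' * C := h4
  have k2 : C'ᵀ * C = C * C' := by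
    calc C'ᵀ * C = (Cᵀ * C')ᵀ := by
          rw [Matrix.transpose_mul, Matrix.transpose_transpose]
      _ = (C * C')ᵀ := by rw [hC]
      _ = C * C' := h3
  have e1 : C * C'ᵀ * C = C := by
    have := congrArg Matrix.transpose h1
    rw [Matrix.transpose_mul, Matrix.transpose_mul, hC, ← Matrix.mul_assoc] at this
    exact this
  have e2 : C'ᵀ * C * C'ᵀ = C'ᵀ := by
    have := congrArg Matrix.transpose h2
    rw [Matrix.transpose_mul, Matrix.transpose_mul, hC, ← Matrix.mul_assoc] at this
    exact this
  have e3 : (C * C'ᵀ)ᵀ = C * C'ᵀ := by rw [k]; exact h4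
  have e4 : (C'ᵀ * C)ᵀ = C'ᵀ * C := by rw [k2]; exact h3
  exact mp_unique (A := C) ⟨e1, e2, e3, e4⟩ ⟨h1, h2, h3, h4⟩


section Aux

variable {n m : ℕ} {A : Matrix (Fin n) (Fin n) ℝ} {B : Matrix (Fin n) (Fin m) ℝ}
  {C C' : Matrix (Fin m) (Fin m) ℝ}

lemma psd_blocks (h : (Matrix.fromBlocks A B Bᵀ C).PosSemidef) : Aᵀ = A ∧ Cᵀ = C := by
  have h1 := h.1
  rw [Matrix.IsHermitian, Matrix.conjTranspose_eq_transpose_of_trivial,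
    Matrix.fromBlocks_transpose] at h1
  constructor
  · have := congrArg Matrix.toBlocks₁₁ h1; simpa using this
  · have := congrArg Matrix.toBlocks₂₂ h1; simpa using this

lemma bottom_psd (h : (Matrix.fromBlocks A B Bᵀ C).PosSemidef) :
    ∀ w, 0 ≤ w ⬝ᵥ C *ᵥ w := by
  intro w
  have := h.dotProduct_mulVec_nonneg (Sum.elim 0 w)
  simpa [Matrix.fromBlocks_mulVec, sumElim_dotProduct_sumElim] using this

lemma ker_sub (h : (Matrix.fromBlocks A B Bᵀ C).PosSemidef) :
    ∀ z, C *ᵥ z = 0 → B *ᵥ z = 0 := by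
  intro z hz
  have h0 : (Matrix.fromBlocks A B Bᵀ C) *ᵥ Sum.elim 0 z = 0 := by
    apply (h.dotProduct_mulVec_zero_iff (Sum.elim 0 z)).mp
    simp [Matrix.fromBlocks_mulVec, hz, sumElim_dotProduct_sumElim]
  funext i
  have := congrFun h0 (Sum.inl i)
  simpa [Matrix.fromBlocks_mulVec] using this

lemma bcc (h : (Matrix.fromBlocks A B Bᵀ C).PosSemidef)
    (hC' : IsMoorePenroseInv C C') : B * C' * C = B := by
  have hmv : ∀ w, (B * C' * C) *ᵥ w = B *ᵥ w := by
    intro w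
    have hz : C *ᵥ ((C' * C) *ᵥ w - w) = 0 := by
      rw [Matrix.mulVec_sub, Matrix.mulVec_mulVec, ← Matrix.mul_assoc, hC'.1, sub_self]
    have hb := ker_sub h _ hz
    rw [Matrix.mulVec_sub, Matrix.mulVec_mulVec, ← Matrix.mul_assoc, sub_eq_zero] at hb
    exact hb
  ext i j
  have := congrFun (hmv (Pi.single j 1)) i
  simpa using this

lemma ccb (h : (Matrix.fromBlocks A B Bᵀ C).PosSemidef)
    (hC' : IsMoorePenroseInv C C') : C * C' * Bᵀ = Bᵀ := by
  have hC : Cᵀ = C := (psd_blocks h).2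
  have hsym : C'ᵀ = C' := mp_symm hC hC'
  have := congrArg Matrix.transpose (bcc h hC')
  rw [Matrix.transpose_mul, Matrix.transpose_mul, hC, hsym, ← Matrix.mul_assoc] at this
  exact this

lemma fact (h : (Matrix.fromBlocks A B Bᵀ C).PosSemidef)
    (hC' : IsMoorePenroseInv C C') :
    Matrix.fromBlocks A B Bᵀ C =
      (Matrix.fromBlocks 1 0 (C' * Bᵀ) 1)ᵀ *
        ((Matrix.fromBlocks (A - B * C' * Bᵀ) 0 0 C) *
          (Matrix.fromBlocks 1 0 (C' * Bᵀ) 1)) := by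
  have hC : Cᵀ = C := (psd_blocks h).2
  have hsym : C'ᵀ = C' := mp_symm hC hC'
  have h1 : C * (C' * Bᵀ) = Bᵀ := by rw [← Matrix.mul_assoc]; exact ccb h hC'
  have h2 : B * C' * C = B := bcc h hC'
  rw [Matrix.fromBlocks_transpose, Matrix.fromBlocks_multiply, Matrix.fromBlocks_multiply]
  rw [Matrix.transpose_mul, hsym]
  simp only [Matrix.transpose_zero, Matrix.transpose_one, Matrix.transpose_transpose,
    Matrix.mul_one, Matrix.one_mul, Matrix.mul_zero, Matrix.zero_mul, add_zero, zero_add, h1,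
    Matrix.mul_assoc]
  rw [Matrix.mul_assoc] at h2
  rw [h2, sub_add_cancel]

lemma quadform (h : (Matrix.fromBlocks A B Bᵀ C).PosSemidef)
    (hC' : IsMoorePenroseInv C C') (x : Fin n → ℝ) (y : Fin m → ℝ) :
    Sum.elim x y ⬝ᵥ (Matrix.fromBlocks A B Bᵀ C *ᵥ Sum.elim x y)
      = x ⬝ᵥ ((A - B * C' * Bᵀ) *ᵥ x) +
        ((C' * Bᵀ) *ᵥ x + y) ⬝ᵥ (C *ᵥ ((C' * Bᵀ) *ᵥ x + y)) := by
  conv_lhs => rw [fact h hC']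
  rw [← Matrix.mulVec_mulVec, Matrix.dotProduct_mulVec, Matrix.vecMul_transpose,
    ← Matrix.mulVec_mulVec]
  have hL : (Matrix.fromBlocks 1 0 (C' * Bᵀ) 1 : Matrix _ _ ℝ) *ᵥ Sum.elim x y
      = Sum.elim x ((C' * Bᵀ) *ᵥ x + y) := by
    simp [Matrix.fromBlocks_mulVec]
  rw [hL]
  simp [Matrix.fromBlocks_mulVec, sumElim_dotProduct_sumElim]

end Aux

theorem schur_complement_monotone
    {n m : ℕ}
    (P₁ Q₁ : Matrix (Fin n) (Fin n) ℝ) (P₂ Q₂ : Matrix (Fin n) (Fin m) ℝ)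
    (P₃ Q₃ P₃d Q₃d : Matrix (Fin m) (Fin m) ℝ)
    (hP : (Matrix.fromBlocks P₁ P₂ P₂ᵀ P₃).PosSemidef)
    (hQ : (Matrix.fromBlocks Q₁ Q₂ Q₂ᵀ Q₃).PosSemidef)
    (hPQ : (Matrix.fromBlocks P₁ P₂ P₂ᵀ P₃
              - Matrix.fromBlocks Q₁ Q₂ Q₂ᵀ Q₃).PosSemidef)
    (hP₃ : IsMoorePenroseInv P₃ P₃d) (hQ₃ : IsMoorePenroseInv Q₃ Q₃d) :
    ((P₁ - P₂ * P₃d * P₂ᵀ) - (Q₁ - Q₂ * Q₃d * Q₂ᵀ)).PosSemidef ∧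
      (Q₁ - Q₂ * Q₃d * Q₂ᵀ).PosSemidef := by
  -- symmetry facts
  have hP₁ : P₁ᵀ = P₁ := (psd_blocks hP).1
  have hQ₁ : Q₁ᵀ = Q₁ := (psd_blocks hQ).1
  have hP₃s : P₃ᵀ = P₃ := (psd_blocks hP).2
  have hQ₃s : Q₃ᵀ = Q₃ := (psd_blocks hQ).2
  have hPds : P₃dᵀ = P₃d := mp_symm hP₃s hP₃
  have hQds : Q₃dᵀ = Q₃d := mp_symm hQ₃s hQ₃
  have hSP : (P₁ - P₂ * P₃d * P₂ᵀ)ᵀ = P₁ - P₂ * P₃d * P₂ᵀ := by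
    rw [Matrix.transpose_sub, hP₁, Matrix.transpose_mul, Matrix.transpose_mul,
      Matrix.transpose_transpose, hPds, Matrix.mul_assoc]
  have hSQ : (Q₁ - Q₂ * Q₃d * Q₂ᵀ)ᵀ = Q₁ - Q₂ * Q₃d * Q₂ᵀ := by
    rw [Matrix.transpose_sub, hQ₁, Matrix.transpose_mul, Matrix.transpose_mul,
      Matrix.transpose_transpose, hQds, Matrix.mul_assoc]
  -- quadratic form for S_Q is attained:
  have hSQform : ∀ x : Fin n → ℝ,
      x ⬝ᵥ ((Q₁ - Q₂ * Q₃d * Q₂ᵀ) *ᵥ x)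
        = Sum.elim x (-((Q₃d * Q₂ᵀ) *ᵥ x)) ⬝ᵥ
            (Matrix.fromBlocks Q₁ Q₂ Q₂ᵀ Q₃ *ᵥ Sum.elim x (-((Q₃d * Q₂ᵀ) *ᵥ x))) := by
    intro x
    rw [quadform hQ hQ₃ x (-((Q₃d * Q₂ᵀ) *ᵥ x))]
    simp
  have hSPform : ∀ x : Fin n → ℝ,
      x ⬝ᵥ ((P₁ - P₂ * P₃d * P₂ᵀ) *ᵥ x)
        = Sum.elim x (-((P₃d * P₂ᵀ) *ᵥ x)) ⬝ᵥ
            (Matrix.fromBlocks P₁ P₂ P₂ᵀ P₃ *ᵥ Sum.elim x (-((P₃d * P₂ᵀ) *ᵥ x))) := by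
    intro x
    rw [quadform hP hP₃ x (-((P₃d * P₂ᵀ) *ᵥ x))]
    simp
  have hSQpsd : (Q₁ - Q₂ * Q₃d * Q₂ᵀ).PosSemidef := by
    rw [Matrix.posSemidef_iff_dotProduct_mulVec]
    constructor
    · rw [Matrix.IsHermitian, Matrix.conjTranspose_eq_transpose_of_trivial]
      exact hSQ
    · intro x
      have h0 := hQ.dotProduct_mulVec_nonneg (Sum.elim x (-((Q₃d * Q₂ᵀ) *ᵥ x)))
      rw [star_trivial] at h0 ⊢
      rw [hSQform x]
      exact h0
  refine ⟨Matrix.posSemidef_iff_dotProduct_mulVec.mpr ⟨?_, ?_⟩, hSQpsd⟩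
  · rw [Matrix.IsHermitian, Matrix.conjTranspose_eq_transpose_of_trivial,
      Matrix.transpose_sub, hSP, hSQ]
  · intro x
    rw [star_trivial]
    set y : Fin m → ℝ := -((P₃d * P₂ᵀ) *ᵥ x) with hy
    set v : (Fin n ⊕ Fin m) → ℝ := Sum.elim x y with hv
    have ha : x ⬝ᵥ ((P₁ - P₂ * P₃d * P₂ᵀ) *ᵥ x)
        = v ⬝ᵥ (Matrix.fromBlocks P₁ P₂ P₂ᵀ P₃ *ᵥ v) := hSPform x
    have hb : x ⬝ᵥ ((Q₁ - Q₂ * Q₃d * Q₂ᵀ) *ᵥ x)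
        ≤ v ⬝ᵥ (Matrix.fromBlocks Q₁ Q₂ Q₂ᵀ Q₃ *ᵥ v) := by
      rw [quadform hQ hQ₃ x y]
      have := bottom_psd hQ ((Q₃d * Q₂ᵀ) *ᵥ x + y)
      linarith
    have hd := hPQ.dotProduct_mulVec_nonneg v
    rw [star_trivial, Matrix.sub_mulVec, dotProduct_sub] at hd
    have hgoal : x ⬝ᵥ (((P₁ - P₂ * P₃d * P₂ᵀ) - (Q₁ - Q₂ * Q₃d * Q₂ᵀ)) *ᵥ x)
        = x ⬝ᵥ ((P₁ - P₂ * P₃d * P₂ᵀ) *ᵥ x) - x ⬝ᵥ ((Q₁ - Q₂ * Q₃d * Q₂ᵀ) *ᵥ x) := by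
      rw [Matrix.sub_mulVec, dotProduct_sub]
    rw [hgoal]
    linarith
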